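/- Let G be a finite abelian group, Ω a finite set, and T : G → ℂ^{Ω×Ω} a family of permutation matrices with T_g·T_h = T_{gh} for all g, h. Let S, S' : G → ℂ^{Ω×Ω} both satisfy T_h·S_g = S_{hg} and S_g·T_h = S_{gh} for all g, h ∈ G (and likewise for S'), and let Ω̃₁ ⊆ Ω be such that the map Ω̃₁ × G → Ω, (x, g) ↦ x^g, is a bijection. If (S_ℓ)_{x,y} = (S'_ℓ)_{x,y} for all ℓ ∈ G and all x, y ∈ Ω̃₁, then S_g = S'_g for every g ∈ G. (A commutative association scheme whose thin radical acts regularly on the thick relations is uniquely recoverable from the thin radical and the restriction of its relations to the neighbourhood of a vertex with respect to a thick relation.) -/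
import Mathlib


open scoped BigOperators
open Matrix

noncomputable section

/-- **Unique recoverability**: a scheme whose thin radical acts regularly on the
thick relations is determined by the restriction of the thick relations to the
neighbourhood `Ω̃₁`. -/
theorem stmt7 {G : Type*} [CommGroup G] [Fintype G] [DecidableEq G]
    {Ω : Type*} [Fintype Ω] [DecidableEq Ω]
    (T S S' : G → Matrix Ω Ω ℂ)
    (σ : G → Equiv.Perm Ω)
    (hσ : ∀ (g : G) (x y : Ω), T g x y = if σ g x = y then 1 else 0)
    (hT : ∀ g h : G, T g * T h = T (g * h))
    (hTS : ∀ g h : G, T h * S g = S (h * g))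
    (hST : ∀ g h : G, S g * T h = S (g * h))
    (hTS' : ∀ g h : G, T h * S' g = S' (h * g))
    (hST' : ∀ g h : G, S' g * T h = S' (g * h))
    (Ω₁ : Set Ω)
    (hbij : Function.Bijective (fun p : Ω₁ × G => σ p.2 p.1))
    (heq : ∀ (ℓ : G) (x y : Ω₁), S ℓ (x : Ω) (y : Ω) = S' ℓ (x : Ω) (y : Ω)) :
    ∀ g : G, S g = S' g := by
  -- entrywise consequences of equivariance, for any family R
  have key : ∀ (R : G → Matrix Ω Ω ℂ),
      (∀ g h : G, T h * R g = R (h * g)) →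
      (∀ g h : G, R g * T h = R (g * h)) →
      ∀ (g a b : G) (x y : Ω),
        R g (σ a x) (σ b y) = R (a * g * b⁻¹) x y := by
    intro R hTR hRT g a b x y
    have h1 : ∀ (k h : G) (x y : Ω), R (h * k) x y = R k (σ h x) y := by
      intro k h x y
      rw [← hTR k h, Matrix.mul_apply]
      rw [Finset.sum_eq_single (σ h x)]
      · rw [hσ, if_pos rfl, one_mul]
      · intro z _ hz
        rw [hσ, if_neg (by exact fun h' => hz h'.symm), zero_mul]
      · intro h'; exact absurd (Finset.mem_univ _) h'
    have h2 : ∀ (k h : G) (x y : Ω), R (k * h) x (σ h y) = R k x y := by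
      intro k h x y
      rw [← hRT k h, Matrix.mul_apply]
      rw [Finset.sum_eq_single y]
      · rw [hσ, if_pos rfl, mul_one]
      · intro z _ hz
        rw [hσ, if_neg (fun h' => hz ((σ h).injective h')), mul_zero]
      · intro h'; exact absurd (Finset.mem_univ _) h'
    calc R g (σ a x) (σ b y) = R (a * g) x (σ b y) := (h1 g a x (σ b y)).symm
      _ = R (a * g * b⁻¹ * b) x (σ b y) := by group
      _ = R (a * g * b⁻¹) x y := h2 _ b x y
  intro g
  ext x y
  obtain ⟨⟨x₁, a⟩, hx⟩ := hbij.surjective x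
  obtain ⟨⟨y₁, b⟩, hy⟩ := hbij.surjective y
  simp only at hx hy
  rw [← hx, ← hy, key S hTS hST, key S' hTS' hST', heq]

end
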